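/- Let A be the 2m×2m real Jordan block with rotation blocks Q = [[cos θ, sin θ], [−sin θ, cos θ]] and superdiagonal I₂ blocks, and define v(θ) = cos θ · A^{2m−1}(1,·) + sin θ · A^{2m−1}(2,·) + A^{2m−1}(3,·) ∈ ℝ^{2m} (row vector; for m = 1 the third-row term is omitted). Then for j = 1, …, m, v_{2j−1}(θ) = C(2m, j−1)·cos((2m − j + 1)θ) and v_{2j}(θ) = C(2m, j−1)·sin((2m − j + 1)θ). -/

import Mathlib

/-- The `2m × 2m` real Jordan form with `m` identical rotation blocks
`Q = [[cos θ, sin θ], [−sin θ, cos θ]]` on the diagonal and `I₂` blocks on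
the superdiagonal (0-indexed). -/
noncomputable def jordanOsc (m : ℕ) (θ : ℝ) : Matrix (Fin (2 * m)) (Fin (2 * m)) ℝ :=
  Matrix.of fun i j =>
    if (i : ℕ) / 2 = (j : ℕ) / 2 then
      (if (i : ℕ) % 2 = (j : ℕ) % 2 then Real.cos θ
       else if (i : ℕ) % 2 = 0 then Real.sin θ else -Real.sin θ)
    else if (j : ℕ) / 2 = (i : ℕ) / 2 + 1 ∧ (i : ℕ) % 2 = (j : ℕ) % 2 then 1 else 0

lemma jordan_col (m : ℕ) (θ : ℝ) (l j : Fin (2 * m)) :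
    jordanOsc m θ l j =
      (if (l : ℕ) = (j : ℕ) then Real.cos θ else 0)
      + (if (l : ℕ) = (if (j : ℕ) % 2 = 0 then (j : ℕ) + 1 else (j : ℕ) - 1)
          then (if (j : ℕ) % 2 = 0 then -Real.sin θ else Real.sin θ) else 0)
      + (if 2 ≤ (j : ℕ) then (if (l : ℕ) = (j : ℕ) - 2 then (1 : ℝ) else 0) else 0) := by
  simp only [jordanOsc, Matrix.of_apply]
  split_ifs <;> first | ring1 | (exfalso; omega)

noncomputable def cc (ip jp : ℕ) (a : ℝ) : ℝ :=
  if ip % 2 = jp % 2 then Real.cos a else if ip % 2 = 0 then Real.sin a else -Real.sin a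

lemma cc_congr {i i' j j' : ℕ} (hi : i % 2 = i' % 2) (hj : j % 2 = j' % 2) (a : ℝ) :
    cc i j a = cc i' j' a := by simp only [cc, hi, hj]

lemma cc_step (ip jp : ℕ) (a θ : ℝ) :
    cc ip jp a * Real.cos θ
      + cc ip (jp + 1) a * (if jp % 2 = 0 then -Real.sin θ else Real.sin θ)
      = cc ip jp (a + θ) := by
  rcases Nat.mod_two_eq_zero_or_one ip with hi | hi <;>
    rcases Nat.mod_two_eq_zero_or_one jp with hj | hj <;>
      simp [cc, hi, hj, Nat.add_mod, Real.cos_add, Real.sin_add] <;> ring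

lemma choose_rec (k d ip jp : ℕ) (θ : ℝ) (hd : 1 ≤ d) :
    (k.choose d : ℝ) * cc ip jp (((k - d : ℕ) : ℝ) * θ + θ)
      + (k.choose (d - 1) : ℝ) * cc ip jp (((k - (d - 1) : ℕ) : ℝ) * θ)
      = ((k + 1).choose d : ℝ) * cc ip jp (((k + 1 - d : ℕ) : ℝ) * θ) := by
  obtain ⟨e, rfl⟩ : ∃ e, d = e + 1 := ⟨d - 1, by omega⟩
  simp only [Nat.add_sub_cancel]
  rcases le_or_gt (e + 1) k with h | h
  · have h1 : k - e = (k - (e + 1)) + 1 := by omega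
    have h2 : k + 1 - (e + 1) = (k - (e + 1)) + 1 := by omega
    have h3 : (k + 1).choose (e + 1) = k.choose e + k.choose (e + 1) := Nat.choose_succ_succ k e
    rw [h1, h2, h3]
    push_cast
    ring
  · rcases eq_or_lt_of_le (show k + 1 ≤ e + 1 from h) with h' | h'
    · obtain rfl : e = k := by omega
      simp [Nat.choose_succ_self, Nat.choose_self, Nat.sub_self]
    · have e1 : k.choose (e + 1) = 0 := Nat.choose_eq_zero_of_lt (by omega)
      have e2 : k.choose e = 0 := Nat.choose_eq_zero_of_lt (by omega)
      have e3 : (k + 1).choose (e + 1) = 0 := Nat.choose_eq_zero_of_lt (by omega)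
      simp [e1, e2, e3]

lemma sum_pick {n : ℕ} (c : ℕ) (f : Fin n → ℝ) (v : ℝ) :
    (∑ l : Fin n, f l * (if (l : ℕ) = c then v else 0))
      = if h : c < n then f ⟨c, h⟩ * v else 0 := by
  split_ifs with h
  · rw [Finset.sum_eq_single (⟨c, h⟩ : Fin n)]
    · simp
    · intro l _ hl
      rw [if_neg, mul_zero]
      intro hc; exact hl (Fin.ext hc)
    · simp
  · apply Finset.sum_eq_zero
    intro l _
    have := l.2
    rw [if_neg, mul_zero]
    omega


lemma combine (k iN jN pN : ℕ) (θ : ℝ)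
    (hpar : pN % 2 = (jN + 1) % 2) (hpdiv : pN / 2 = jN / 2) :
    (if iN / 2 ≤ jN / 2 then
        (k.choose (jN / 2 - iN / 2) : ℝ) * cc iN jN (((k - (jN / 2 - iN / 2) : ℕ) : ℝ) * θ)
      else 0) * Real.cos θ
    + (if iN / 2 ≤ pN / 2 then
        (k.choose (pN / 2 - iN / 2) : ℝ) * cc iN pN (((k - (pN / 2 - iN / 2) : ℕ) : ℝ) * θ)
      else 0) * (if jN % 2 = 0 then -Real.sin θ else Real.sin θ)
    + (if 2 ≤ jN then
        (if iN / 2 ≤ (jN - 2) / 2 then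
          (k.choose ((jN - 2) / 2 - iN / 2) : ℝ) *
            cc iN (jN - 2) (((k - ((jN - 2) / 2 - iN / 2) : ℕ) : ℝ) * θ)
        else 0)
      else 0)
    = if iN / 2 ≤ jN / 2 then
        ((k + 1).choose (jN / 2 - iN / 2) : ℝ) *
          cc iN jN (((k + 1 - (jN / 2 - iN / 2) : ℕ) : ℝ) * θ)
      else 0 := by
  rw [hpdiv]
  have hccp : ∀ a, cc iN pN a = cc iN (jN + 1) a := fun a => cc_congr rfl hpar a
  simp only [hccp]
  by_cases h2j : 2 ≤ jN
  · have e2 : (jN - 2) / 2 = jN / 2 - 1 := by omega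
    have hcc2 : ∀ a, cc iN (jN - 2) a = cc iN jN a := fun a => cc_congr rfl (by omega) a
    rw [if_pos h2j, e2]
    simp only [hcc2]
    by_cases hI : iN / 2 ≤ jN / 2
    · rw [if_pos hI, if_pos hI, if_pos hI]
      by_cases hd : 1 ≤ jN / 2 - iN / 2
      · rw [if_pos (show iN / 2 ≤ jN / 2 - 1 by omega)]
        have e3 : jN / 2 - 1 - iN / 2 = (jN / 2 - iN / 2) - 1 := by omega
        rw [e3]
        have hrec := choose_rec k (jN / 2 - iN / 2) iN jN θ hd
        have hstep := cc_step iN jN (((k - (jN / 2 - iN / 2) : ℕ) : ℝ) * θ) θ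
        linear_combination hrec + (k.choose (jN / 2 - iN / 2) : ℝ) * hstep
      · rw [if_neg (show ¬ iN / 2 ≤ jN / 2 - 1 by omega)]
        have hd0 : jN / 2 - iN / 2 = 0 := by omega
        rw [hd0]
        simp only [Nat.choose_zero_right, Nat.sub_zero, Nat.cast_one, one_mul]
        have ha : ((k + 1 : ℕ) : ℝ) * θ = ((k : ℕ) : ℝ) * θ + θ := by push_cast; ring
        rw [ha]
        have hstep := cc_step iN jN (((k : ℕ) : ℝ) * θ) θ
        linear_combination hstep
    · rw [if_neg hI, if_neg hI, if_neg hI,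
        if_neg (show ¬ iN / 2 ≤ jN / 2 - 1 by omega)]
      ring
  · rw [if_neg h2j]
    by_cases hI : iN / 2 ≤ jN / 2
    · rw [if_pos hI, if_pos hI, if_pos hI]
      have hd0 : jN / 2 - iN / 2 = 0 := by omega
      rw [hd0]
      simp only [Nat.choose_zero_right, Nat.sub_zero, Nat.cast_one, one_mul]
      have ha : ((k + 1 : ℕ) : ℝ) * θ = ((k : ℕ) : ℝ) * θ + θ := by push_cast; ring
      rw [ha]
      have hstep := cc_step iN jN (((k : ℕ) : ℝ) * θ) θ
      linear_combination hstep
    · rw [if_neg hI, if_neg hI, if_neg hI]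
      ring

lemma pow_entry (m : ℕ) (θ : ℝ) (k : ℕ) (i j : Fin (2 * m)) :
    (jordanOsc m θ ^ k) i j =
      if (i : ℕ) / 2 ≤ (j : ℕ) / 2 then
        (k.choose ((j : ℕ) / 2 - (i : ℕ) / 2) : ℝ) *
          cc (i : ℕ) (j : ℕ) (((k - ((j : ℕ) / 2 - (i : ℕ) / 2) : ℕ) : ℝ) * θ)
      else 0 := by
  induction k generalizing j with
  | zero =>
    rw [pow_zero, Matrix.one_apply]
    rcases eq_or_ne i j with rfl | hne
    · simp [cc]
    · have hne' : (i : ℕ) ≠ (j : ℕ) := fun h => hne (Fin.ext h)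
      rw [if_neg hne]
      split_ifs with h1
      · rcases Nat.lt_or_ge ((j : ℕ) / 2 - (i : ℕ) / 2) 1 with h2 | h2
        · have hd : (j : ℕ) / 2 - (i : ℕ) / 2 = 0 := by omega
          rw [hd]
          simp only [Nat.choose_zero_right]
          have : ¬ ((i : ℕ) % 2 = (j : ℕ) % 2) := by omega
          simp only [cc, if_neg this]
          split_ifs <;> simp
        · rw [Nat.choose_eq_zero_of_lt (by omega), Nat.cast_zero, zero_mul]
      · rfl
  | succ k ih =>
    rw [pow_succ, Matrix.mul_apply]
    have hjlt : (j : ℕ) < 2 * m := j.2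
    simp only [jordan_col m θ _ j, mul_add, Finset.sum_add_distrib]
    by_cases hjp : (j : ℕ) % 2 = 0
    · have hpair : (if (j : ℕ) % 2 = 0 then (j : ℕ) + 1 else (j : ℕ) - 1) = (j : ℕ) + 1 :=
        if_pos hjp
      have hplt : (j : ℕ) + 1 < 2 * m := by omega
      rw [hpair, sum_pick, sum_pick, dif_pos hjlt, dif_pos hplt]
      by_cases hj2 : 2 ≤ (j : ℕ)
      · simp only [if_pos hj2]
        rw [sum_pick, dif_pos (show (j : ℕ) - 2 < 2 * m by omega)]
        rw [ih, ih, ih]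
        simp only [Fin.val_mk, mul_one]
        have hc := combine k (i : ℕ) (j : ℕ) ((j : ℕ) + 1) θ (by omega) (by omega)
        rw [if_pos hj2] at hc
        exact hc
      · simp only [if_neg hj2, mul_zero, Finset.sum_const_zero]
        rw [ih, ih]
        simp only [Fin.val_mk]
        have hc := combine k (i : ℕ) (j : ℕ) ((j : ℕ) + 1) θ (by omega) (by omega)
        rw [if_neg hj2] at hc
        exact hc
    · have hjp1 : (j : ℕ) % 2 = 1 := by omega
      have hpair : (if (j : ℕ) % 2 = 0 then (j : ℕ) + 1 else (j : ℕ) - 1) = (j : ℕ) - 1 :=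
        if_neg hjp
      have hplt : (j : ℕ) - 1 < 2 * m := by omega
      rw [hpair, sum_pick, sum_pick, dif_pos hjlt, dif_pos hplt]
      by_cases hj2 : 2 ≤ (j : ℕ)
      · simp only [if_pos hj2]
        rw [sum_pick, dif_pos (show (j : ℕ) - 2 < 2 * m by omega)]
        rw [ih, ih, ih]
        simp only [Fin.val_mk, mul_one]
        have hc := combine k (i : ℕ) (j : ℕ) ((j : ℕ) - 1) θ (by omega) (by omega)
        rw [if_pos hj2] at hc
        exact hc
      · simp only [if_neg hj2, mul_zero, Finset.sum_const_zero]
        rw [ih, ih]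
        simp only [Fin.val_mk]
        have hc := combine k (i : ℕ) (j : ℕ) ((j : ℕ) - 1) θ (by omega) (by omega)
        rw [if_neg hj2] at hc
        exact hc


theorem v_entries (m : ℕ) (hm : 2 ≤ m) (θ : ℝ) :
    let v : Fin (2 * m) → ℝ := fun k =>
      Real.cos θ * (jordanOsc m θ ^ (2 * m - 1)) ⟨0, by omega⟩ k
        + Real.sin θ * (jordanOsc m θ ^ (2 * m - 1)) ⟨1, by omega⟩ k
        + (jordanOsc m θ ^ (2 * m - 1)) ⟨2, by omega⟩ k
    ∀ (j : ℕ) (hj1 : 1 ≤ j) (hj2 : j ≤ m),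
      v ⟨2 * j - 2, by omega⟩ =
        ((2 * m).choose (j - 1) : ℝ) * Real.cos ((2 * (m : ℝ) - j + 1) * θ) ∧
      v ⟨2 * j - 1, by omega⟩ =
        ((2 * m).choose (j - 1) : ℝ) * Real.sin ((2 * (m : ℝ) - j + 1) * θ) := by
  intro v j hj1 hj2
  have hv : ∀ c : Fin (2 * m), v c =
      Real.cos θ * (jordanOsc m θ ^ (2 * m - 1)) ⟨0, by omega⟩ c
        + Real.sin θ * (jordanOsc m θ ^ (2 * m - 1)) ⟨1, by omega⟩ c
        + (jordanOsc m θ ^ (2 * m - 1)) ⟨2, by omega⟩ c := fun c => rfl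
  have hcast : ((2 * m - j : ℕ) : ℝ) = 2 * (m : ℝ) - j := by
    push_cast [Nat.cast_sub (show j ≤ 2 * m by omega)]; ring
  have hang2 : (2 * (m : ℝ) - j + 1) * θ = ((2 * m - j : ℕ) : ℝ) * θ + θ := by
    rw [hcast]; ring
  have hP : 1 < j → ((2 * m).choose (j - 1) : ℝ) =
      ((2 * m - 1).choose (j - 1) : ℝ) + ((2 * m - 1).choose (j - 2) : ℝ) := by
    intro h1
    have hcs := Nat.choose_succ_succ (2 * m - 1) (j - 2)
    have e1 : (2 * m - 1).succ = 2 * m := by omega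
    have e2 : (j - 2).succ = j - 1 := by omega
    rw [e1, e2] at hcs
    rw [hcs]; push_cast; ring
  constructor
  · rw [hv, pow_entry, pow_entry, pow_entry]
    simp only [Fin.val_mk]
    rw [if_pos (show (0 : ℕ) / 2 ≤ (2 * j - 2) / 2 by omega),
        if_pos (show (1 : ℕ) / 2 ≤ (2 * j - 2) / 2 by omega)]
    have d1 : (2 * j - 2) / 2 - 0 / 2 = j - 1 := by omega
    rw [d1]
    have a1 : 2 * m - 1 - (j - 1) = 2 * m - j := by omega
    rw [a1]
    have e0 : (2 * j - 2) % 2 = 0 := by omega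
    have hcc1 : ∀ a, cc 0 (2 * j - 2) a = Real.cos a := by intro a; simp [cc, e0]
    have hcc2 : ∀ a, cc 1 (2 * j - 2) a = -Real.sin a := by intro a; simp [cc, e0]
    have hcc3 : ∀ a, cc 2 (2 * j - 2) a = Real.cos a := by intro a; simp [cc, e0]
    rw [hcc1, hcc2, hcc3, hang2, Real.cos_add]
    rcases eq_or_lt_of_le hj1 with h1 | h1
    · obtain rfl : j = 1 := h1.symm
      rw [if_neg (show ¬ (2 : ℕ) / 2 ≤ (2 * 1 - 2) / 2 by omega)]
      simp only [show (1 : ℕ) - 1 = 0 by rfl, Nat.choose_zero_right, Nat.cast_one, one_mul]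
      ring
    · rw [if_pos (show (2 : ℕ) / 2 ≤ (2 * j - 2) / 2 by omega)]
      have d3 : (2 * j - 2) / 2 - 2 / 2 = j - 2 := by omega
      rw [d3]
      have a3 : 2 * m - 1 - (j - 2) = 2 * m - j + 1 := by omega
      rw [a3]
      have hang3 : ((2 * m - j + 1 : ℕ) : ℝ) * θ = ((2 * m - j : ℕ) : ℝ) * θ + θ := by
        push_cast; ring
      rw [hang3, Real.cos_add, hP h1]
      ring
  · rw [hv, pow_entry, pow_entry, pow_entry]
    simp only [Fin.val_mk]
    rw [if_pos (show (0 : ℕ) / 2 ≤ (2 * j - 1) / 2 by omega),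
        if_pos (show (1 : ℕ) / 2 ≤ (2 * j - 1) / 2 by omega)]
    have d1 : (2 * j - 1) / 2 - 0 / 2 = j - 1 := by omega
    rw [d1]
    have a1 : 2 * m - 1 - (j - 1) = 2 * m - j := by omega
    rw [a1]
    have e0 : (2 * j - 1) % 2 = 1 := by omega
    have hcc1 : ∀ a, cc 0 (2 * j - 1) a = Real.sin a := by intro a; simp [cc, e0]
    have hcc2 : ∀ a, cc 1 (2 * j - 1) a = Real.cos a := by intro a; simp [cc, e0]
    have hcc3 : ∀ a, cc 2 (2 * j - 1) a = Real.sin a := by intro a; simp [cc, e0]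
    rw [hcc1, hcc2, hcc3, hang2, Real.sin_add]
    rcases eq_or_lt_of_le hj1 with h1 | h1
    · obtain rfl : j = 1 := h1.symm
      rw [if_neg (show ¬ (2 : ℕ) / 2 ≤ (2 * 1 - 1) / 2 by omega)]
      simp only [show (1 : ℕ) - 1 = 0 by rfl, Nat.choose_zero_right, Nat.cast_one, one_mul]
      ring
    · rw [if_pos (show (2 : ℕ) / 2 ≤ (2 * j - 1) / 2 by omega)]
      have d3 : (2 * j - 1) / 2 - 2 / 2 = j - 2 := by omega
      rw [d3]
      have a3 : 2 * m - 1 - (j - 2) = 2 * m - j + 1 := by omega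
      rw [a3]
      have hang3 : ((2 * m - j + 1 : ℕ) : ℝ) * θ = ((2 * m - j : ℕ) : ℝ) * θ + θ := by
        push_cast; ring
      rw [hang3, Real.sin_add, hP h1]
      ring
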